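/- Let μ ≥ 1, Q ∈ ℝ^{μ×μ} and ρ ∈ ℝ^{1×μ}, and suppose that for all row vectors α, α' ∈ ℝ^{1×μ} the identity [Qᵀ(αᵀα' − α'ᵀα) + (α'ᵀα − αᵀα')Q]ρᵀ = 0 holds. Then: (a) if μ ≥ 3 and Q is a single Jordan block (Q_{ii} = q for all i, Q_{i,i+1} = 1, all other entries 0, for some q ∈ ℝ), then ρ = 0; and (b) if Q is diagonal with trace 0 and Q ≠ 0, then ρ = 0. -/
import Mathlib


open Matrix

/-- The single Jordan block with eigenvalue `q`: `Q_{ii} = q`, `Q_{i,i+1} = 1`. -/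
def jordanBlock (μ : ℕ) (q : ℝ) : Matrix (Fin μ) (Fin μ) ℝ :=
  Matrix.of fun i j => if i = j then q else if j.val = i.val + 1 then 1 else 0

/-- If `[Qᵀ(αᵀα' - α'ᵀα) + (α'ᵀα - αᵀα')Q] ρᵀ = 0` for all row vectors `α, α'`,
then (a) if `μ ≥ 3` and `Q` is a single Jordan block, `ρ = 0`; and
(b) if `Q` is diagonal, traceless and nonzero, `ρ = 0`. -/
theorem stmt6 (μ : ℕ) (hμ : 1 ≤ μ) (Q : Matrix (Fin μ) (Fin μ) ℝ) (ρ : Fin μ → ℝ)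
    (h : ∀ α α' : Fin μ → ℝ,
      (Qᵀ * (vecMulVec α α' - vecMulVec α' α) +
        (vecMulVec α' α - vecMulVec α α') * Q).mulVec ρ = 0) :
    ((3 ≤ μ ∧ ∃ q : ℝ, Q = jordanBlock μ q) → ρ = 0) ∧
    ((Q.IsDiag ∧ Matrix.trace Q = 0 ∧ Q ≠ 0) → ρ = 0) := by
  have key : ∀ i j k : Fin μ,
      Q i k * ρ j - Q j k * ρ i + (if k = j then ∑ m, Q i m * ρ m else 0)
        - (if k = i then ∑ m, Q j m * ρ m else 0) = 0 := by
    intro i j k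
    have := congrFun (h (Pi.single i 1) (Pi.single j 1)) k
    simp only [Matrix.mulVec, Matrix.mul_apply, Matrix.vecMulVec_apply, dotProduct,
      Matrix.add_apply, Matrix.sub_apply, Matrix.transpose_apply, Pi.single_apply,
      Pi.zero_apply, mul_ite, mul_one, mul_zero, ite_mul, zero_mul, one_mul,
      mul_sub, sub_mul, add_mul, Finset.sum_sub_distrib, Finset.sum_add_distrib,
      Finset.sum_ite_eq, Finset.sum_ite_eq'] at this
    have A : ∀ a b : Fin μ,
        ∑ x : Fin μ, (∑ x_1 : Fin μ, if x = b then if x_1 = a then Q x_1 k else 0 else 0) * ρ x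
          = Q a k * ρ b := by
      intro a b
      rw [Finset.sum_eq_single b]
      · simp
      · intro c _ hc; simp [hc]
      · simp
    have B : ∀ (a : Fin μ) (c : Fin μ),
        (∑ x : Fin μ, if k = c then Q a x * ρ x else 0)
          = if k = c then ∑ m : Fin μ, Q a m * ρ m else 0 := by
      intro a c; split_ifs <;> simp
    simp only [Finset.mem_univ, if_true] at this
    rw [A, A, B, B] at this
    linarith [this]
  constructor
  · rintro ⟨hμ3, q, rfl⟩
    -- part (a): Jordan block
    have hρ0 : ∀ m : Fin μ, m.val = 0 → ρ m = 0 := by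
      intro m hm0
      obtain ⟨j, hj⟩ : ∃ j : Fin μ, j.val = 1 := ⟨⟨1, by omega⟩, rfl⟩
      obtain ⟨k, hk⟩ : ∃ k : Fin μ, k.val = 2 := ⟨⟨2, by omega⟩, rfl⟩
      have := key m j k
      have e1 : jordanBlock μ q m k = 0 := by
        simp only [jordanBlock, Matrix.of_apply]
        rw [if_neg (by simp [Fin.ext_iff]; omega), if_neg (by omega)]
      have e2 : jordanBlock μ q j k = 1 := by
        simp only [jordanBlock, Matrix.of_apply]
        rw [if_neg (by simp [Fin.ext_iff]; omega), if_pos (by omega)]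
      rw [e1, e2, if_neg (by simp [Fin.ext_iff]; omega),
        if_neg (by simp [Fin.ext_iff]; omega)] at this
      linarith [this]
    have hstep : ∀ m : Fin μ, 1 ≤ m.val → ρ m = 0 := by
      intro m hm
      obtain ⟨i, hiv⟩ : ∃ i : Fin μ, i.val + 1 = m.val := ⟨⟨m.val - 1, by omega⟩, by show m.val - 1 + 1 = m.val; omega⟩
      obtain ⟨j, hj1, hj2⟩ : ∃ j : Fin μ, j.val ≠ i.val ∧ j.val ≠ m.val := by
        by_cases hc : m.val + 1 < μ
        · exact ⟨⟨m.val + 1, hc⟩, by show m.val + 1 ≠ i.val; omega, by show m.val + 1 ≠ m.val; omega⟩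
        · have := m.isLt
          exact ⟨⟨0, by omega⟩, by show (0:ℕ) ≠ i.val; omega, by show (0:ℕ) ≠ m.val; omega⟩
      have him : i ≠ m := by simp [Fin.ext_iff]; omega
      have hji : j ≠ i := by simp [Fin.ext_iff]; omega
      have := key i j j
      have e1 : jordanBlock μ q i j = 0 := by
        simp only [jordanBlock, Matrix.of_apply]
        rw [if_neg (by simp [Fin.ext_iff]; omega), if_neg (by omega)]
      have e2 : jordanBlock μ q j j = q := by simp [jordanBlock]
      have e3 : ∑ m' : Fin μ, jordanBlock μ q i m' * ρ m' = q * ρ i + ρ m := by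
        have hc : ∀ m' : Fin μ, jordanBlock μ q i m' * ρ m'
            = (if m' = i then q * ρ i else 0) + (if m' = m then ρ m else 0) := by
          intro m'
          rcases eq_or_ne m' i with rfl | h1
          · simp [jordanBlock, him]
          · rcases eq_or_ne m' m with rfl | h2
            · have e : jordanBlock μ q i m' = 1 := by
                simp only [jordanBlock, Matrix.of_apply]
                rw [if_neg him, if_pos (by omega)]
              simp [e, h1]
            · have e : jordanBlock μ q i m' = 0 := by
                simp only [jordanBlock, Matrix.of_apply]
                rw [if_neg (fun h' => h1 h'.symm),
                  if_neg (fun h' => h2 (Fin.ext (by omega)))]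
              simp [e, h1, h2]
        rw [Finset.sum_congr rfl fun m' _ => hc m', Finset.sum_add_distrib,
          Finset.sum_ite_eq', Finset.sum_ite_eq']
        simp
      rw [e1, e2, if_pos rfl, if_neg hji, e3] at this
      linarith [this]
    funext m
    show ρ m = 0
    rcases Nat.eq_zero_or_pos m.val with hm | hm
    · exact hρ0 m hm
    · exact hstep m hm
  · rintro ⟨hdiag, htr, hne⟩
    -- part (b): diagonal traceless nonzero
    have hd : ∀ i j : Fin μ, i ≠ j → (Q i i - Q j j) * ρ j = 0 := by
      intro i j hij
      have := key i j i
      have h1 : Q j i = 0 := hdiag (Ne.symm hij)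
      have h2 : ∑ m, Q j m * ρ m = Q j j * ρ j := by
        rw [Finset.sum_eq_single j]
        · intro c _ hc; rw [hdiag (Ne.symm hc)]; ring
        · simp
      rw [h1, h2] at this
      rw [if_neg hij, if_pos rfl] at this
      nlinarith [this]
    funext j
    show ρ j = 0
    by_contra hj
    have hall : ∀ i, Q i i = Q j j := by
      intro i
      rcases eq_or_ne i j with rfl | hij
      · rfl
      · have := hd i j hij
        rcases mul_eq_zero.mp this with h' | h'
        · linarith
        · exact absurd h' hj
    have htr' : (μ : ℝ) * Q j j = 0 := by
      have ht : Matrix.trace Q = ∑ i, Q i i := rfl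
      rw [ht] at htr
      calc (μ : ℝ) * Q j j = ∑ _i : Fin μ, Q j j := by
            rw [Finset.sum_const, Finset.card_univ, Fintype.card_fin, nsmul_eq_mul]
        _ = ∑ i, Q i i := Finset.sum_congr rfl fun i _ => (hall i).symm
        _ = 0 := htr
    have hQjj : Q j j = 0 := by
      rcases mul_eq_zero.mp htr' with h' | h'
      · exact absurd h' (by positivity)
      · exact h'
    apply hne
    ext a b
    rcases eq_or_ne a b with rfl | hab
    · rw [hall a, hQjj]; rfl
    · rw [hdiag hab]; rfl
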